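/- arXiv:math/9807069 — 2 statements merged into one kernel-verified Lean document; each statement's English description precedes it below -/
import Mathlib

section
/- If A ∈ GL_n(ℚ) has prime order p and does not have 1 as an eigenvalue, then the characteristic polynomial of A equals (1 + x + ⋯ + x^{p-1})^r where r = n/(p-1); in particular p - 1 divides n. -/
open Polynomial Matrix

/-- Evaluating the characteristic polynomial gives a determinant. -/
private lemma my_eval_charpoly {m : ℕ} {R : Type*} [CommRing R]
    (B : Matrix (Fin m) (Fin m) R) (μ : R) :
    eval μ B.charpoly = ((Matrix.scalar (Fin m)) μ - B).det := by
  rw [Matrix.charpoly, _root_.eval_det, Matrix.matPolyEquiv_charmatrix,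
    eval_sub, eval_X, eval_C]

/-- A monic polynomial all of whose monic irreducible factors equal a fixed monic
irreducible `g` is a power of `g`. -/
private lemma my_pow_of_factors (g : ℚ[X]) (hg : g.Monic) (hgd : 0 < g.natDegree) :
    ∀ d (f : ℚ[X]), f.natDegree = d → f.Monic →
      (∀ q : ℚ[X], q.Monic → Irreducible q → q ∣ f → q = g) →
      ∃ k, f = g ^ k := by
  intro d
  induction d using Nat.strong_induction_on with
  | _ d ih =>
    intro f hfd hf hfac
    rcases Nat.eq_zero_or_pos d with hd0 | hdpos
    · subst hd0
      exact ⟨0, by simpa [pow_zero] using hf.natDegree_eq_zero.mp hfd⟩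
    · have hfu : ¬ IsUnit f := by
        intro hu
        have := Polynomial.natDegree_eq_zero_of_isUnit hu
        omega
      obtain ⟨q, hqirr, hqdvd⟩ := WfDvdMonoid.exists_irreducible_factor hfu hf.ne_zero
      have hq0 : q ≠ 0 := hqirr.ne_zero
      have hnirr : Irreducible (normalize q) :=
        (normalize_associated q).symm.irreducible hqirr
      have hnmonic : (normalize q).Monic := Polynomial.monic_normalize hq0
      have hndvd : normalize q ∣ f := (normalize_dvd_iff).mpr hqdvd
      have hng : normalize q = g := hfac _ hnmonic hnirr hndvd
      obtain ⟨f', hf'⟩ := hng ▸ hndvd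
      have hf'monic : f'.Monic := hg.of_mul_monic_left (hf' ▸ hf)
      have hdeg : f.natDegree = g.natDegree + f'.natDegree := by
        rw [hf', Polynomial.natDegree_mul hg.ne_zero hf'monic.ne_zero]
      have hlt : f'.natDegree < d := by omega
      obtain ⟨k, hk⟩ := ih _ hlt f' rfl hf'monic
        (fun q hqm hqi hqd => hfac q hqm hqi (hqd.trans (Dvd.intro_left _ hf'.symm)))
      exact ⟨k + 1, by rw [hf', hk, pow_succ, mul_comm]⟩

/-- If `A ∈ GL_n(ℚ)` has prime order `p` and does not have `1` as an eigenvalue,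
then the characteristic polynomial of `A` equals `(1 + x + ⋯ + x^{p-1})^r` with
`r = n/(p-1)`; in particular `p - 1` divides `n`. -/
theorem charpoly_of_prime_order_no_fixed_vector (n p : ℕ) (hp : p.Prime)
    (A : Matrix (Fin n) (Fin n) ℚ) (hA : A ^ p = 1) (hA1 : A ≠ 1)
    (heig : (A - 1).det ≠ 0) :
    (p - 1) ∣ n ∧
      A.charpoly = (∑ i ∈ Finset.range p, X ^ i) ^ (n / (p - 1)) := by
  haveI : Fact p.Prime := ⟨hp⟩
  rcases Nat.eq_zero_or_pos n with hn0 | hn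
  · subst hn0
    refine absurd ?_ hA1
    ext i j
    exact absurd i.2 (by omega)
  set S : ℚ[X] := ∑ i ∈ Finset.range p, X ^ i with hS
  have hScyc : S = cyclotomic p ℚ := (Polynomial.cyclotomic_prime ℚ p).symm
  have hSmonic : S.Monic := hScyc ▸ Polynomial.cyclotomic.monic p ℚ
  have hSirr : Irreducible S := hScyc ▸ Polynomial.cyclotomic.irreducible_rat hp.pos
  have hSdeg : S.natDegree = p - 1 := by
    rw [hScyc, Polynomial.natDegree_cyclotomic, Nat.totient_prime hp]
  -- the complexified matrix
  set f : ℚ →+* ℂ := algebraMap ℚ ℂ with hf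
  set B : Matrix (Fin n) (Fin n) ℂ := A.map f with hB
  have hBp : B ^ p = 1 := by
    have := congrArg (f.mapMatrix) hA
    simpa [map_pow] using this
  have hBcharpoly : B.charpoly = A.charpoly.map f := Matrix.charpoly_map A f
  have hBdet1 : (B - 1).det ≠ 0 := by
    have h2 : B - 1 = (A - 1).map ⇑f := by
      rw [← RingHom.mapMatrix_apply, map_sub, _root_.map_one, RingHom.mapMatrix_apply]
    rw [h2, ← RingHom.mapMatrix_apply, ← RingHom.map_det]
    exact fun h => heig ((_root_.map_eq_zero f).mp h)
  -- every monic irreducible factor of the charpoly is S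
  have key : ∀ q : ℚ[X], q.Monic → Irreducible q → q ∣ A.charpoly → q = S := by
    intro q hqm hqi hqd
    have hqdeg : 0 < (q.map f).degree := by
      rw [Polynomial.degree_map]
      exact Polynomial.natDegree_pos_iff_degree_pos.mp hqi.natDegree_pos
    obtain ⟨μ, hμ⟩ := Complex.exists_root hqdeg
    -- μ is a root of the charpoly of B
    have hμchar : eval μ B.charpoly = 0 := by
      obtain ⟨c, hc⟩ := Polynomial.map_dvd f hqd
      rw [hBcharpoly, hc, eval_mul, hμ.eq_zero, zero_mul]
    have hdet0 : ((Matrix.scalar (Fin n)) μ - B).det = 0 := by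
      rw [← my_eval_charpoly]; exact hμchar
    have hdet0' : (B - (Matrix.scalar (Fin n)) μ).det = 0 := by
      rw [show B - (Matrix.scalar (Fin n)) μ = -((Matrix.scalar (Fin n)) μ - B) from
        (neg_sub _ _).symm, Matrix.det_neg, hdet0, mul_zero]
    -- μ^p = 1
    have hμp : μ ^ p = 1 := by
      have hcomm : Commute B ((Matrix.scalar (Fin n)) μ) :=
        (Matrix.scalar_commute μ (fun r' => Commute.all μ r') B).symm
      have hgeo := hcomm.geom_sum₂_mul p
      have hdet := congrArg Matrix.det hgeo
      rw [Matrix.det_mul, hdet0', mul_zero, hBp] at hdet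
      have hscalar : ((Matrix.scalar (Fin n)) μ) ^ p = (Matrix.scalar (Fin n)) (μ ^ p) :=
        (map_pow (Matrix.scalar (Fin n)) μ p).symm
      rw [hscalar] at hdet
      have h1 : (1 : Matrix (Fin n) (Fin n) ℂ) - (Matrix.scalar (Fin n)) (μ ^ p)
          = Matrix.diagonal (fun _ => 1 - μ ^ p) := by
        rw [Matrix.scalar_apply, ← Matrix.diagonal_one, Matrix.diagonal_sub]
      rw [h1, Matrix.det_diagonal, Finset.prod_const] at hdet
      have hcard : (Finset.univ : Finset (Fin n)).card = n := by simp
      rw [hcard] at hdet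
      have h0 : 1 - μ ^ p = 0 := pow_eq_zero_iff (by omega) |>.mp hdet.symm
      linear_combination -h0
    -- μ ≠ 1
    have hμ1 : μ ≠ 1 := by
      intro h
      subst h
      apply hBdet1
      have hsc1 : (Matrix.scalar (Fin n)) (1 : ℂ) = 1 := map_one _
      rw [show B - 1 = -((Matrix.scalar (Fin n)) 1 - B) by rw [hsc1]; exact (neg_sub _ _).symm,
        Matrix.det_neg, hdet0, mul_zero]
    -- μ is a root of S
    have hSroot : (Polynomial.aeval μ) S = 0 := by
      have hsum : (Polynomial.aeval μ) S = ∑ i ∈ Finset.range p, μ ^ i := by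
        simp [hS]
      have hgs := geom_sum_mul μ p
      rw [hμp, sub_self] at hgs
      rcases mul_eq_zero.mp hgs with h | h
      · rw [hsum, h]
      · exact absurd (by linear_combination h) hμ1
    have hqroot : (Polynomial.aeval μ) q = 0 := by
      rw [Polynomial.aeval_def, ← Polynomial.eval_map]
      exact hμ.eq_zero
    have e1 : q = minpoly ℚ μ := minpoly.eq_of_irreducible_of_monic hqi hqroot hqm
    have e2 : S = minpoly ℚ μ := minpoly.eq_of_irreducible_of_monic hSirr hSroot hSmonic
    rw [e1, e2]
  -- conclude
  obtain ⟨k, hk⟩ := my_pow_of_factors S hSmonic (by rw [hSdeg]; have := hp.two_le; omega) A.charpoly.natDegree A.charpoly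
    rfl A.charpoly_monic key
  have hdegn : A.charpoly.natDegree = n := by
    rw [Matrix.charpoly_natDegree_eq_dim, Fintype.card_fin]
  have hnk : n = k * (p - 1) := by
    rw [← hdegn, hk, Polynomial.natDegree_pow, hSdeg]
  have hp1 : 0 < p - 1 := by have := hp.two_le; omega
  constructor
  · exact ⟨k, by rw [hnk, Nat.mul_comm]⟩
  · rw [hk, hnk, Nat.mul_div_cancel k hp1]
end

section
/- If A ∈ GL_n(ℚ) has prime order p and 1 is not an eigenvalue of A, then A is conjugate in GL_n(ℚ) to a matrix with integer entries (namely a block-diagonal matrix of companion matrices of the p-th cyclotomic polynomial). -/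
open Matrix Polynomial

set_option maxHeartbeats 1600000 in
set_option synthInstance.maxHeartbeats 400000 in
/-- If `A ∈ GL_n(ℚ)` has prime order `p` and `1` is not an eigenvalue of `A`,
then `A` is conjugate in `GL_n(ℚ)` to a matrix with integer entries. -/
theorem conjugate_to_integer_matrix (n p : ℕ) (hp : p.Prime)
    (A : Matrix (Fin n) (Fin n) ℚ) (hA : A ^ p = 1) (hA1 : A ≠ 1)
    (heig : (A - 1).det ≠ 0) :
    ∃ S : Matrix (Fin n) (Fin n) ℚ, IsUnit S.det ∧
      ∃ B : Matrix (Fin n) (Fin n) ℤ, S * A * S⁻¹ = B.map (Int.cast : ℤ → ℚ) := by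
  classical
  haveI : Fact p.Prime := ⟨hp⟩
  set q : ℚ[X] := Polynomial.cyclotomic p ℚ with hq_def
  have hqirr : Irreducible q := Polynomial.cyclotomic.irreducible_rat hp.pos
  haveI : Fact (Irreducible q) := ⟨hqirr⟩
  have hq0 : q ≠ 0 := hqirr.ne_zero
  have hdeg : q.natDegree = p - 1 := by
    rw [hq_def, Polynomial.natDegree_cyclotomic, Nat.totient_prime hp]
  -- A is a root of q
  have hAunit : IsUnit (A - 1) :=
    (Matrix.isUnit_iff_isUnit_det _).mpr (isUnit_iff_ne_zero.mpr heig)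
  have hAq : Polynomial.aeval A q = 0 := by
    have h1 : Polynomial.aeval A q * (A - 1) = 0 := by
      have := congrArg (Polynomial.aeval A) (Polynomial.cyclotomic_prime_mul_X_sub_one ℚ p)
      simpa [_root_.map_mul, map_sub, map_pow, hA] using this
    have h2 := congrArg (· * (A - 1)⁻¹) h1
    simpa [Matrix.mul_assoc, Matrix.mul_nonsing_inv _
      ((Matrix.isUnit_iff_isUnit_det _).mp hAunit)] using h2
  -- Set up the field K = ℚ[x]/(q) and V as a K-vector space
  set K := AdjoinRoot q
  set V := (Fin n → ℚ)
  set f : V →ₗ[ℚ] V := Matrix.toLin' A with hf_def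
  have hfq : Polynomial.aeval f q = 0 := by
    have : Polynomial.aeval (Matrix.toLinAlgEquiv' (R := ℚ) (n := Fin n) A) q
        = Matrix.toLinAlgEquiv' (Polynomial.aeval A q) :=
      (Polynomial.aeval_algHom_apply (Matrix.toLinAlgEquiv'.toAlgHom) A q)
    rw [hAq, map_zero] at this
    exact this
  set φ : K →ₐ[ℚ] Module.End ℚ V := Ideal.Quotient.liftₐ (Ideal.span {q}) (Polynomial.aeval f)
    (fun a ha => by
      obtain ⟨y, rfl⟩ := Ideal.mem_span_singleton.mp ha
      rw [_root_.map_mul, hfq, zero_mul]) with hφ_def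
  letI : Module K V := Module.compHom V φ.toRingHom
  have hsmul : ∀ (k : K) (v : V), k • v = φ k v := fun _ _ => rfl
  haveI : IsScalarTower ℚ K V := by
    constructor
    intro r k v
    rw [hsmul, hsmul, Algebra.smul_def, _root_.map_mul, φ.commutes]
    simp [Module.End.mul_apply, Module.algebraMap_end_apply]
  haveI : Module.Finite K V := Module.Finite.of_restrictScalars_finite ℚ K V
  set c := Module.Basis.ofVectorSpace K V
  haveI : Fintype (Module.Basis.ofVectorSpaceIndex K V) := FiniteDimensional.fintypeBasisIndex c
  set pb := AdjoinRoot.powerBasis hq0 with hpb_def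
  set b0 := pb.basis.smulTower c with hb0_def
  have hcard : Fintype.card (Fin pb.dim × Module.Basis.ofVectorSpaceIndex K V) = n := by
    rw [← Module.finrank_eq_card_basis b0]
    simp [V, Module.finrank_fin_fun]
  set e := Fintype.equivFinOfCardEq hcard with he_def
  set b := b0.reindex e with hb_def
  set M := LinearMap.toMatrix b b f with hM_def
  -- root powers
  have hroot : φ (AdjoinRoot.root q) = f := by
    have h1 : φ (AdjoinRoot.mk q X) = Polynomial.aeval f (X : ℚ[X]) := by
      rw [hφ_def]
      show Ideal.Quotient.liftₐ _ _ _ (Ideal.Quotient.mk _ X) = _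
      rw [Ideal.Quotient.liftₐ_apply]
      rfl
    rw [show AdjoinRoot.root q = AdjoinRoot.mk q X from rfl, h1, Polynomial.aeval_X]
  have hfsmul : ∀ (k : K) (v : V), f (k • v) = (AdjoinRoot.root q * k) • v := by
    intro k v
    have hmm := _root_.map_mul φ (AdjoinRoot.root q) k
    rw [hsmul, hsmul, ← hroot, hmm]
    rfl
  -- sum of roots is zero
  have hsum : ∑ i ∈ Finset.range p, (AdjoinRoot.root q) ^ i = 0 := by
    have h1 : Polynomial.aeval (AdjoinRoot.root q) (∑ i ∈ Finset.range p, (X : ℚ[X]) ^ i)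
        = 0 := by
      have h0 : (∑ i ∈ Finset.range p, (X : ℚ[X]) ^ i) = q := by
        rw [hq_def, Polynomial.cyclotomic_prime ℚ p]
      rw [h0, Polynomial.aeval_def,
        Subsingleton.elim (algebraMap ℚ (AdjoinRoot q)) (AdjoinRoot.of q)]
      exact AdjoinRoot.eval₂_root q
    simpa [map_sum, map_pow] using h1
  have hdim : pb.dim = q.natDegree := rfl
  have hdim' : pb.dim + 1 = p := by
    have h2 : 2 ≤ p := hp.two_le
    rw [hdim, hdeg]
    omega
  have hgen : pb.gen = AdjoinRoot.root q := rfl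
  have hrootpow : (AdjoinRoot.root q) ^ pb.dim
      = -∑ i : Fin pb.dim, pb.basis i := by
    have h2 : ∑ i ∈ Finset.range (pb.dim + 1), (AdjoinRoot.root q) ^ i = 0 := by
      rw [hdim']; exact hsum
    rw [Finset.sum_range_succ] at h2
    have h3 : (AdjoinRoot.root q) ^ pb.dim = -∑ i ∈ Finset.range pb.dim,
        (AdjoinRoot.root q) ^ i := by linear_combination h2
    rw [h3, Finset.sum_range]
    congr 1
    refine Finset.sum_congr rfl fun i _ => ?_
    rw [pb.basis_eq_pow, hgen]
  -- all entries of M are integers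
  have key : ∀ r s : Fin n, ∃ z : ℤ, M r s = (z : ℚ) := by
    intro r s
    set x := e.symm r with hx_def
    set y := e.symm s with hy_def
    have hMrs : M r s = pb.basis.repr
        (c.repr (((AdjoinRoot.root q) ^ ((y.1 : ℕ) + 1)) • c y.2) x.2) x.1 := by
      rw [hM_def, LinearMap.toMatrix_apply, hb_def, Module.Basis.reindex_apply,
        Module.Basis.repr_reindex_apply, ← hx_def, ← hy_def, hb0_def, Module.Basis.smulTower_apply]
      rw [pb.basis_eq_pow, hgen, hfsmul, ← pow_succ']
      rw [Module.Basis.smulTower_repr]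
    rw [hMrs]
    rw [_root_.map_smul, Module.Basis.repr_self, Finsupp.smul_apply, Finsupp.single_apply]
    by_cases hyx : y.2 = x.2
    · rw [if_pos hyx, smul_eq_mul, mul_one]
      have hle : (↑y.1 : ℕ) + 1 ≤ pb.dim := y.1.2
      rcases lt_or_eq_of_le hle with hlt | heq
      · -- y.1 + 1 < pb.dim : basis vector
        have : (AdjoinRoot.root q) ^ ((y.1 : ℕ) + 1) = pb.basis ⟨(y.1 : ℕ) + 1, hlt⟩ := by
          rw [pb.basis_eq_pow, hgen]
        rw [this, Module.Basis.repr_self, Finsupp.single_apply]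
        exact ⟨if (⟨(y.1 : ℕ) + 1, hlt⟩ : Fin pb.dim) = x.1 then 1 else 0, by split_ifs <;> simp⟩
      · -- y.1 + 1 = pb.dim
        rw [heq, hrootpow, map_neg, map_sum, Finsupp.coe_neg, Finsupp.coe_finset_sum,
          Pi.neg_apply, Finset.sum_apply]
        refine ⟨-1, ?_⟩
        have : ∀ i : Fin pb.dim, (pb.basis.repr (pb.basis i)) x.1
            = if i = x.1 then (1 : ℚ) else 0 := by
          intro i; rw [Module.Basis.repr_self, Finsupp.single_apply]
        rw [Finset.sum_congr rfl fun i _ => this i]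
        simp
    · rw [if_neg hyx]
      exact ⟨0, by simp⟩
  -- change of basis
  set std := Pi.basisFun ℚ (Fin n) with hstd_def
  set S := b.toMatrix ⇑std with hS_def
  set T := std.toMatrix ⇑b with hT_def
  have hST : S * T = 1 := by
    rw [hS_def, hT_def, Module.Basis.toMatrix_mul_toMatrix_flip]
  have hSdet : IsUnit S.det := by
    apply IsUnit.of_mul_eq_one T.det
    rw [← Matrix.det_mul, hST, Matrix.det_one]
  have hSinv : S⁻¹ = T := Matrix.inv_eq_right_inv hST
  have hconj : S * A * S⁻¹ = M := by
    rw [hSinv, hM_def, hS_def, hT_def]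
    have hA' : A = LinearMap.toMatrix std std f := by
      rw [hstd_def, LinearMap.toMatrix_eq_toMatrix', hf_def, LinearMap.toMatrix'_toLin']
    rw [hA']
    exact basis_toMatrix_mul_linearMap_toMatrix_mul_basis_toMatrix b std b std f
  refine ⟨S, hSdet, fun r s => (key r s).choose, ?_⟩
  rw [hconj]
  ext r s
  show M r s = ((key r s).choose : ℚ)
  exact (key r s).choose_spec
end
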